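/- The derivative of the theta function at the special point, Θ₃'(π(1+i)/2, i) = i·Σ_{n∈ℤ} 2n·exp(−πn² + πin(1+i)) = i·Σ_{n∈ℤ} 2n·(−1)^n·exp(−πn² − πn), is a nonzero purely imaginary number. -/

import Mathlib

open Complex

noncomputable def Theta3' (u τ : ℂ) : ℂ :=
  ∑' n : ℤ, I * (2 * (n : ℂ)) *
    Complex.exp (Real.pi * I * τ * (n : ℂ) ^ 2 + 2 * I * (n : ℂ) * u)

namespace ThetaAux

open Real

noncomputable def f (n : ℤ) : ℝ :=
  2 * (n : ℝ) * (-1) ^ n * Real.exp (-π * ((n : ℝ) ^ 2 + n))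

lemma abs_neg_one_zpow (k : ℤ) : |(-1 : ℝ) ^ k| = 1 := by
  rcases Int.even_or_odd k with h | h
  · rw [h.neg_one_zpow, abs_one]
  · rw [h.neg_one_zpow, abs_neg, abs_one]

lemma term_eq (n : ℤ) :
    I * (2 * (n : ℂ)) *
      Complex.exp ((Real.pi : ℂ) * I * I * (n : ℂ) ^ 2 +
        2 * I * (n : ℂ) * ((Real.pi : ℂ) * (1 + I) / 2)) = I * (f n : ℂ) := by
  have harg : (Real.pi : ℂ) * I * I * (n : ℂ) ^ 2 +
      2 * I * (n : ℂ) * ((Real.pi : ℂ) * (1 + I) / 2) =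
      ((-π * ((n : ℝ) ^ 2 + n) : ℝ) : ℂ) + (n : ℂ) * ((Real.pi : ℂ) * I) := by
    push_cast
    linear_combination ((Real.pi : ℂ) * (n : ℂ) ^ 2 + (Real.pi : ℂ) * (n : ℂ)) * Complex.I_sq
  rw [harg, Complex.exp_add, Complex.exp_int_mul, Complex.exp_pi_mul_I, f]
  push_cast
  ring

lemma norm_f_pos (n : ℕ) : ‖f ((n : ℤ) + 1)‖ ≤ 2 * Real.exp (-2) ^ (n + 1) := by
  have h1 : ‖f ((n : ℤ) + 1)‖ = 2 * ((n : ℝ) + 1) * Real.exp (-π * (((n : ℝ) + 1) ^ 2 + ((n : ℝ) + 1))) := by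
    rw [f]
    push_cast
    rw [Real.norm_eq_abs, abs_mul, abs_of_pos (Real.exp_pos _)]
    congr 1
    rw [abs_mul, abs_neg_one_zpow, mul_one]
    rw [abs_of_pos]; positivity
  rw [h1, ← Real.exp_nat_mul]
  have hb : 2 * ((n : ℝ) + 1) ≤ 2 * Real.exp ((n : ℝ) + 1) := by
    have := Real.add_one_le_exp ((n : ℝ) + 1)
    nlinarith [Nat.cast_nonneg (α := ℝ) n]
  have hc : Real.exp (-π * (((n : ℝ) + 1) ^ 2 + ((n : ℝ) + 1))) ≤
      Real.exp (-(3 : ℝ) * ((n : ℝ) + 1)) := by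
    apply Real.exp_le_exp.2
    have hpi : (3 : ℝ) ≤ π := Real.pi_gt_three.le
    nlinarith [Nat.cast_nonneg (α := ℝ) n, sq_nonneg ((n : ℝ) + 1)]
  calc 2 * ((n : ℝ) + 1) * Real.exp (-π * (((n : ℝ) + 1) ^ 2 + ((n : ℝ) + 1)))
      ≤ 2 * Real.exp ((n : ℝ) + 1) * Real.exp (-(3 : ℝ) * ((n : ℝ) + 1)) := by
        apply mul_le_mul hb hc (Real.exp_pos _).le (by positivity)
    _ = 2 * Real.exp (((n : ℕ) + 1 : ℕ) * (-2 : ℝ)) := by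
        rw [mul_assoc, ← Real.exp_add]
        push_cast
        ring_nf

lemma norm_f_neg (n : ℕ) : ‖f (-((n : ℤ) + 2))‖ ≤ 2 * Real.exp (-2) ^ (n + 2) := by
  set m : ℝ := (n : ℝ) + 2 with hm
  have hm2 : (2 : ℝ) ≤ m := by rw [hm]; nlinarith [Nat.cast_nonneg (α := ℝ) n]
  have h1 : ‖f (-((n : ℤ) + 2))‖ = 2 * m * Real.exp (-π * (m ^ 2 - m)) := by
    rw [f]
    push_cast
    rw [Real.norm_eq_abs, abs_mul, abs_of_pos (Real.exp_pos _)]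
    have harg : -π * ((-((n : ℝ) + 2)) ^ 2 + -((n : ℝ) + 2)) = -π * (m ^ 2 - m) := by
      rw [hm]; ring
    rw [harg]
    congr 1
    rw [abs_mul, abs_neg_one_zpow, mul_one]
    rw [abs_of_neg (by nlinarith [Nat.cast_nonneg (α := ℝ) n] : 2 * -((n : ℝ) + 2) < 0)]
    rw [hm]; ring
  rw [h1, ← Real.exp_nat_mul]
  have hb : 2 * m ≤ 2 * Real.exp m := by
    have := Real.add_one_le_exp m
    nlinarith
  have hc : Real.exp (-π * (m ^ 2 - m)) ≤ Real.exp (-(3 : ℝ) * m) := by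
    apply Real.exp_le_exp.2
    have hpi : (3 : ℝ) ≤ π := Real.pi_gt_three.le
    have h0 : (0 : ℝ) ≤ m * (m - 2) := mul_nonneg (by linarith) (by linarith)
    have h1 : (0 : ℝ) ≤ (π - 3) * (m ^ 2 - m) := mul_nonneg (by linarith) (by nlinarith)
    nlinarith
  calc 2 * m * Real.exp (-π * (m ^ 2 - m))
      ≤ 2 * Real.exp m * Real.exp (-(3 : ℝ) * m) := by
        apply mul_le_mul hb hc (Real.exp_pos _).le (by positivity)
    _ = 2 * Real.exp (((n : ℕ) + 2 : ℕ) * (-2 : ℝ)) := by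
        rw [mul_assoc, ← Real.exp_add, hm]
        push_cast
        ring_nf

lemma r_lt_one : Real.exp (-2 : ℝ) < 1 := Real.exp_lt_one_iff.2 (by norm_num)

lemma r_le_third : Real.exp (-2 : ℝ) ≤ 1 / 3 := by
  have h3 : (3 : ℝ) ≤ Real.exp 2 := by
    have := Real.add_one_le_exp (2 : ℝ); linarith
  rw [Real.exp_neg, inv_le_comm₀ (by positivity) (by norm_num)]
  linarith

lemma hasSum_geo (k : ℕ) :
    HasSum (fun n : ℕ => 2 * Real.exp (-2) ^ (n + k))
      (2 * Real.exp (-2) ^ k * (1 - Real.exp (-2))⁻¹) := by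
  have h := (hasSum_geometric_of_lt_one (Real.exp_pos _).le r_lt_one).mul_left
    (2 * Real.exp (-2) ^ k)
  have e : (fun n : ℕ => 2 * Real.exp (-2) ^ (n + k)) =
      fun i : ℕ => 2 * Real.exp (-2) ^ k * Real.exp (-2) ^ i := by
    funext n
    rw [pow_add]
    ring
  rw [e]; exact h

lemma summable_pos : Summable fun n : ℕ => f ((n : ℤ) + 1) :=
  Summable.of_norm_bounded (hasSum_geo 1).summable norm_f_pos

lemma summable_neg2 : Summable fun n : ℕ => f (-((n : ℤ) + 2)) :=
  Summable.of_norm_bounded (hasSum_geo 2).summable norm_f_neg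

lemma key : ∃ T : ℝ, 0 < T ∧
    Theta3' ((Real.pi : ℂ) * (1 + I) / 2) I = I * (T : ℂ) := by
  set a : ℝ := ∑' n : ℕ, f ((n : ℤ) + 1) with ha_def
  set c : ℝ := ∑' n : ℕ, f (-((n : ℤ) + 2)) with hc_def
  have ha : HasSum (fun n : ℕ => f ((n : ℤ) + 1)) a := summable_pos.hasSum
  have hc : HasSum (fun n : ℕ => f (-((n : ℤ) + 2))) c := summable_neg2.hasSum
  have ha' : HasSum (fun n : ℕ => f n) a := by
    refine (hasSum_nat_add_iff' 1).mp ?_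
    have hfun : (fun n : ℕ => f ((n + 1 : ℕ) : ℤ)) = fun n : ℕ => f ((n : ℤ) + 1) := by
      funext n; congr 1
    have hval : a - ∑ i ∈ Finset.range 1, f ((i : ℕ) : ℤ) = a := by
      simp [f]
    rw [hfun, hval]; exact ha
  have hb' : HasSum (fun n : ℕ => f (-((n : ℤ) + 1))) (c + 2) := by
    refine (hasSum_nat_add_iff' 1).mp ?_
    have hfun : (fun n : ℕ => f (-(((n + 1 : ℕ) : ℤ) + 1))) = fun n : ℕ => f (-((n : ℤ) + 2)) := by
      funext n; congr 1
    have hval : c + 2 - ∑ i ∈ Finset.range 1, f (-((i : ℤ) + 1)) = c := by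
      norm_num [f]
    rw [hfun, hval]; exact hc
  have hsum : HasSum f (a + (c + 2)) := HasSum.of_nat_of_neg_add_one ha' hb'
  have hna : ‖a‖ ≤ 2 * Real.exp (-2) ^ 1 * (1 - Real.exp (-2))⁻¹ := by
    rw [← ha.tsum_eq]
    exact tsum_of_norm_bounded (hasSum_geo 1) norm_f_pos
  have hnc : ‖c‖ ≤ 2 * Real.exp (-2) ^ 2 * (1 - Real.exp (-2))⁻¹ := by
    rw [← hc.tsum_eq]
    exact tsum_of_norm_bounded (hasSum_geo 2) norm_f_neg
  have hrpos : (0 : ℝ) < 1 - Real.exp (-2) := by linarith [r_lt_one]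
  have hr0 : (0 : ℝ) < Real.exp (-2) := Real.exp_pos _
  have hinv : (1 - Real.exp (-2))⁻¹ ≤ 3 / 2 := by
    rw [inv_le_comm₀ hrpos (by norm_num)]
    linarith [r_le_third]
  have hba : 2 * Real.exp (-2) ^ 1 * (1 - Real.exp (-2))⁻¹ ≤ 1 := by
    nlinarith [r_le_third, inv_nonneg.2 hrpos.le]
  have hbc : 2 * Real.exp (-2) ^ 2 * (1 - Real.exp (-2))⁻¹ ≤ 1 / 3 := by
    nlinarith [r_le_third, inv_nonneg.2 hrpos.le, hr0]
  have hTpos : 0 < a + (c + 2) := by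
    have h1 := abs_le.1 ((Real.norm_eq_abs a ▸ hna).trans hba)
    have h2 := abs_le.1 ((Real.norm_eq_abs c ▸ hnc).trans hbc)
    linarith [h1.1, h2.1]
  refine ⟨a + (c + 2), hTpos, ?_⟩
  rw [Theta3']
  have heq : (fun n : ℤ => I * (2 * (n : ℂ)) *
      Complex.exp ((Real.pi : ℂ) * I * I * (n : ℂ) ^ 2 + 2 * I * (n : ℂ) *
        ((Real.pi : ℂ) * (1 + I) / 2))) = fun n : ℤ => I * (f n : ℂ) := by
    funext n; exact term_eq n
  rw [heq, tsum_mul_left, ← Complex.ofReal_tsum, hsum.tsum_eq]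

end ThetaAux

theorem theta_deriv_special_point_purely_imaginary :
    (Theta3' ((Real.pi : ℂ) * (1 + I) / 2) I).re = 0 ∧
      Theta3' ((Real.pi : ℂ) * (1 + I) / 2) I ≠ 0 := by
  obtain ⟨T, hT, hEq⟩ := ThetaAux.key
  constructor
  · rw [hEq, Complex.mul_re]
    simp
  · rw [hEq]
    intro h
    have h2 : (T : ℂ) = 0 := by
      have hI : (I : ℂ) ≠ 0 := Complex.I_ne_zero
      exact (mul_eq_zero.1 h).resolve_left hI
    exact hT.ne' (by exact_mod_cast h2)
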